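/- The minimum Hamming weight of a nonzero element of the Reed-Muller code M^l (viewed as a subspace of F_2^{2^m}) is 2^l, for 0 ≤ l ≤ m. -/

import Mathlib

set_option synthInstance.maxHeartbeats 1000000
set_option maxHeartbeats 1000000

open MvPolynomial

noncomputable def gI (m : ℕ) (I : Finset (Fin m)) : MvPolynomial (Fin m) (ZMod 2) :=
  ∏ i ∈ I, (X i - 1)

noncomputable def XI (m : ℕ) (I : Finset (Fin m)) : MvPolynomial (Fin m) (ZMod 2) :=
  ∏ i ∈ I, X i

/-- The ideal (X₁²-1, …, Xₘ²-1). -/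
noncomputable def relIdeal (m : ℕ) : Ideal (MvPolynomial (Fin m) (ZMod 2)) :=
  Ideal.span {p | ∃ i : Fin m, p = X i ^ 2 - 1}

/-- The ambient algebra A = F₂[X₁,…,Xₘ]/(X₁²-1,…,Xₘ²-1). -/
abbrev Amb (m : ℕ) := MvPolynomial (Fin m) (ZMod 2) ⧸ relIdeal m

/-- The ideal M of A generated by the images of the Xᵢ - 1. -/
noncomputable def Mideal (m : ℕ) : Ideal (Amb m) :=
  Ideal.span {a | ∃ i : Fin m, a = Ideal.Quotient.mk (relIdeal m) (X i - 1)}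

/-- The identification F₂^{2^m} → A sending a coefficient vector (indexed by the subsets
S ⊆ {1,…,m}) to the corresponding element of A. -/
noncomputable def toA (m : ℕ) (w : Finset (Fin m) → ZMod 2) : Amb m :=
  Ideal.Quotient.mk (relIdeal m) (∑ S : Finset (Fin m), w S • XI m S)

section RMaux
open Finset
variable {m : ℕ}

def dval (v : Finset (Fin m) → ZMod 2) (S : Finset (Fin m)) : ZMod 2 :=
  ∑ U ∈ S.powerset, v U

lemma dval_add (v1 v2 : Finset (Fin m) → ZMod 2) (S : Finset (Fin m)) :
    dval (fun U => v1 U + v2 U) S = dval v1 S + dval v2 S := by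
  unfold dval; rw [Finset.sum_add_distrib]

lemma pow_helper (n r : ℕ) : 2 ^ (n + 1 - r) ≤ 2 ^ (n - r) + 2 ^ (n - r) := by
  have h : n + 1 - r ≤ (n - r) + 1 := by omega
  calc 2 ^ (n + 1 - r) ≤ 2 ^ ((n - r) + 1) := Nat.pow_le_pow_right (by norm_num) h
  _ = 2 ^ (n - r) + 2 ^ (n - r) := by ring

theorem RM_lb (G : Finset (Fin m)) : ∀ (r : ℕ) (e : Finset (Fin m) → ZMod 2),
    (∀ U, e U ≠ 0 → U ⊆ G) → (∀ U, e U ≠ 0 → U.card ≤ r) → e ≠ 0 →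
    2 ^ (G.card - r) ≤ (G.powerset.filter (fun S => dval e S ≠ 0)).card := by
  induction G using Finset.induction_on with
  | empty =>
    intro r e hsupp _ hne
    have h0 : ∃ U, e U ≠ 0 := by
      by_contra h; push_neg at h; exact hne (funext fun U => h U)
    obtain ⟨U, hU⟩ := h0
    have hUe : U = ∅ := Finset.subset_empty.1 (hsupp U hU)
    subst hUe
    have hd : dval e ∅ ≠ 0 := by simpa [dval] using hU
    calc 2 ^ ((∅ : Finset (Fin m)).card - r) = 1 := by simp
    _ ≤ _ := Finset.card_pos.2 ⟨(∅ : Finset (Fin m)), Finset.mem_filter.2 ⟨by simp, hd⟩⟩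
  | @insert a G ha IH =>
    intro r e hsupp hdeg hne
    set e0 : Finset (Fin m) → ZMod 2 := fun U => if a ∈ U then 0 else e U with he0
    set e1 : Finset (Fin m) → ZMod 2 := fun U => if a ∈ U then 0 else e (insert a U) with he1
    have hs0 : ∀ U, e0 U ≠ 0 → U ⊆ G := by
      intro U hU
      by_cases h : a ∈ U
      · simp [he0, h] at hU
      · have h2 := hsupp U (by simpa [he0, h] using hU)
        intro x hx
        rcases Finset.mem_insert.1 (h2 hx) with rfl | hxG
        · exact absurd hx h
        · exact hxG
    have hs1 : ∀ U, e1 U ≠ 0 → U ⊆ G := by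
      intro U hU
      by_cases h : a ∈ U
      · simp [he1, h] at hU
      · have h2 := hsupp _ (by simpa [he1, h] using hU)
        intro x hx
        rcases Finset.mem_insert.1 (h2 (Finset.mem_insert_of_mem hx)) with rfl | hxG
        · exact absurd hx h
        · exact hxG
    have hd0 : ∀ U, e0 U ≠ 0 → U.card ≤ r := by
      intro U hU
      by_cases h : a ∈ U
      · simp [he0, h] at hU
      · exact hdeg U (by simpa [he0, h] using hU)
    have hd1 : ∀ U, e1 U ≠ 0 → U.card + 1 ≤ r := by
      intro U hU
      by_cases h : a ∈ U
      · simp [he1, h] at hU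
      · have h2 := hdeg _ (by simpa [he1, h] using hU)
        rwa [Finset.card_insert_of_notMem h] at h2
    have hval0 : ∀ S : Finset (Fin m), a ∉ S → dval e S = dval e0 S := by
      intro S hS
      refine Finset.sum_congr rfl fun U hU => ?_
      have hU' : a ∉ U := fun h => hS (Finset.mem_powerset.1 hU h)
      simp [he0, hU']
    have hval1 : ∀ S : Finset (Fin m), a ∉ S →
        dval e (insert a S) = dval e0 S + dval e1 S := by
      intro S hS
      unfold dval
      rw [Finset.powerset_insert, Finset.sum_union, Finset.sum_image]
      · congr 1
        · refine Finset.sum_congr rfl fun U hU => ?_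
          have hU' : a ∉ U := fun h => hS (Finset.mem_powerset.1 hU h)
          simp [he0, hU']
        · refine Finset.sum_congr rfl fun U hU => ?_
          have hU' : a ∉ U := fun h => hS (Finset.mem_powerset.1 hU h)
          simp [he1, hU']
      · intro U hU V hV hUV
        have hU' : a ∉ U := fun h => hS (Finset.mem_powerset.1 hU h)
        have hV' : a ∉ V := fun h => hS (Finset.mem_powerset.1 hV h)
        have := congrArg (fun s => Finset.erase s a) hUV
        simpa [Finset.erase_insert hU', Finset.erase_insert hV'] using this
      · rw [Finset.disjoint_left]
        intro U hU hU2
        obtain ⟨V, _, rfl⟩ := Finset.mem_image.1 hU2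
        exact (fun h => hS (Finset.mem_powerset.1 hU h)) (Finset.mem_insert_self a V)
    have hdisjbase : Disjoint G.powerset (G.powerset.image (insert a)) := by
      rw [Finset.disjoint_left]
      rintro U hU hU2
      obtain ⟨V, _, rfl⟩ := Finset.mem_image.1 hU2
      exact ha (Finset.mem_powerset.1 hU (Finset.mem_insert_self a V))
    have hcount : ((insert a G).powerset.filter (fun S => dval e S ≠ 0)).card
        = (G.powerset.filter (fun S => dval e0 S ≠ 0)).card
          + (G.powerset.filter (fun S => dval e0 S + dval e1 S ≠ 0)).card := by
      rw [Finset.powerset_insert, Finset.filter_union,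
        Finset.card_union_of_disjoint (Finset.disjoint_filter_filter hdisjbase)]
      congr 1
      · apply congrArg
        apply Finset.filter_congr
        intro S hS
        have hS' : a ∉ S := fun h => ha (Finset.mem_powerset.1 hS h)
        rw [hval0 S hS']
      · apply Finset.card_nbij' (fun S => Finset.erase S a) (insert a)
        · intro S hS
          simp only [Finset.mem_coe, Finset.mem_filter, Finset.mem_image] at hS
          obtain ⟨⟨V, hV, rfl⟩, hne2⟩ := hS
          have hV' : a ∉ V := fun h => ha (Finset.mem_powerset.1 hV h)
          simp only [Finset.mem_coe]; rw [Finset.erase_insert hV']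
          refine Finset.mem_filter.2 ⟨hV, ?_⟩
          rw [← hval1 V hV']; exact hne2
        · intro S hS
          simp only [Finset.mem_coe, Finset.mem_filter] at hS
          have hS' : a ∉ S := fun h => ha (Finset.mem_powerset.1 hS.1 h)
          refine Finset.mem_filter.2 ⟨Finset.mem_image_of_mem _ hS.1, ?_⟩
          rw [hval1 S hS']; exact hS.2
        · intro S hS
          simp only [Finset.mem_coe, Finset.mem_filter, Finset.mem_image] at hS
          obtain ⟨⟨V, hV, rfl⟩, -⟩ := hS
          exact Finset.insert_erase (Finset.mem_insert_self a V)
        · intro S hS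
          simp only [Finset.mem_coe, Finset.mem_filter] at hS
          have hS' : a ∉ S := fun h => ha (Finset.mem_powerset.1 hS.1 h)
          exact Finset.erase_insert hS'
    rw [hcount, Finset.card_insert_of_notMem ha]
    by_cases h1 : e1 = 0
    · have h0ne : e0 ≠ 0 := by
        intro h0
        apply hne; funext U
        by_cases hA : a ∈ U
        · have h2 := congrFun h1 (U.erase a)
          simpa [he1, Finset.notMem_erase, Finset.insert_erase hA] using h2
        · simpa [he0, hA] using congrFun h0 U
      have heq : ∀ S ∈ G.powerset, (dval e0 S + dval e1 S ≠ 0) ↔ (dval e0 S ≠ 0) := by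
        intro S _
        have hz : dval e1 S = 0 := by simp [dval, h1]
        rw [hz, add_zero]
      rw [Finset.filter_congr heq]
      have hI := IH r e0 hs0 hd0 h0ne
      calc 2 ^ (G.card + 1 - r) ≤ 2 ^ (G.card - r) + 2 ^ (G.card - r) := pow_helper _ _
      _ ≤ _ := Nat.add_le_add hI hI
    · have hr1 : 1 ≤ r := by
        have h2 : ∃ U, e1 U ≠ 0 := by
          by_contra h; push_neg at h; exact h1 (funext h)
        obtain ⟨U, hU⟩ := h2
        have := hd1 U hU; omega
      have hd1' : ∀ U, e1 U ≠ 0 → U.card ≤ r - 1 := fun U hU => by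
        have := hd1 U hU; omega
      have harith : G.card - (r - 1) = G.card + 1 - r := by omega
      by_cases h0 : e0 = 0
      · have heq : ∀ S ∈ G.powerset, (dval e0 S + dval e1 S ≠ 0) ↔ (dval e1 S ≠ 0) := by
          intro S _
          have hz : dval e0 S = 0 := by simp [dval, h0]
          rw [hz, zero_add]
        rw [Finset.filter_congr heq]
        have hI := IH (r-1) e1 hs1 hd1' h1
        rw [harith] at hI
        exact le_trans hI (Nat.le_add_left _ _)
      · by_cases hsum : (fun U => e0 U + e1 U) = (0 : Finset (Fin m) → ZMod 2)
        · have he01 : ∀ U, e0 U = e1 U := by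
            intro U
            have h2 := congrFun hsum U
            simp only [Pi.zero_apply] at h2
            have h3 := eq_neg_of_add_eq_zero_left h2
            rw [CharTwo.neg_eq] at h3; exact h3
          have hd0' : ∀ U, e0 U ≠ 0 → U.card ≤ r - 1 := by
            intro U hU; exact hd1' U (by rw [← he01]; exact hU)
          have hI := IH (r-1) e0 hs0 hd0' h0
          rw [harith] at hI
          exact le_trans hI (Nat.le_add_right _ _)
        · have hs01 : ∀ U, (e0 U + e1 U) ≠ 0 → U ⊆ G := by
            intro U hU
            by_cases hz : e0 U = 0
            · exact hs1 U (by rw [hz, zero_add] at hU; exact hU)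
            · exact hs0 U hz
          have hd01 : ∀ U, (e0 U + e1 U) ≠ 0 → U.card ≤ r := by
            intro U hU
            by_cases hz : e0 U = 0
            · have := hd1' U (by rw [hz, zero_add] at hU; exact hU); omega
            · exact hd0 U hz
          have hI0 := IH r e0 hs0 hd0 h0
          have hI1 := IH r (fun U => e0 U + e1 U) hs01 hd01 hsum
          have heq : ∀ S ∈ G.powerset,
              (dval e0 S + dval e1 S ≠ 0) ↔ (dval (fun U => e0 U + e1 U) S ≠ 0) := by
            intro S _; rw [dval_add]
          rw [Finset.filter_congr heq]
          calc 2 ^ (G.card + 1 - r) ≤ 2 ^ (G.card - r) + 2 ^ (G.card - r) := pow_helper _ _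
          _ ≤ _ := Nat.add_le_add hI0 hI1

-- append dval_dval from a.lean
lemma dval_dval (v : Finset (Fin m) → ZMod 2) (S : Finset (Fin m)) :
    dval (dval v) S = v S := by
  unfold dval
  have h1 : ∀ U ∈ S.powerset, ∑ W ∈ U.powerset, v W
      = ∑ W ∈ S.powerset, if W ⊆ U then v W else 0 := by
    intro U hU
    rw [Finset.sum_ite, Finset.sum_const_zero, add_zero]
    apply Finset.sum_congr _ (fun _ _ => rfl)
    ext W
    simp only [Finset.mem_filter, Finset.mem_powerset]
    exact ⟨fun h => ⟨h.trans (Finset.mem_powerset.1 hU), h⟩, fun h => h.2⟩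
  rw [Finset.sum_congr rfl h1, Finset.sum_comm]
  have h2 : ∀ W ∈ S.powerset, ∑ U ∈ S.powerset, (if W ⊆ U then v W else 0)
      = (if W = S then (1 : ZMod 2) else 0) * v W := by
    intro W hW
    rw [Finset.sum_ite, Finset.sum_const_zero, add_zero, Finset.sum_const]
    have : S.powerset.filter (fun U => W ⊆ U) = Finset.Icc W S :=
      (Finset.Icc_eq_filter_powerset W S).symm
    rw [this, Finset.card_Icc_finset (Finset.mem_powerset.1 hW)]
    rcases eq_or_ne W S with rfl | hne
    · simp
    · have hlt : W.card < S.card :=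
        Finset.card_lt_card (lt_of_le_of_ne (Finset.mem_powerset.1 hW) hne)
      have : S.card - W.card ≠ 0 := by omega
      obtain ⟨k, hk⟩ := Nat.exists_eq_succ_of_ne_zero this
      rw [hk, if_neg hne]
      simp [pow_succ, nsmul_eq_mul, CharTwo.two_eq_zero]
  rw [Finset.sum_congr rfl h2]
  simp only [ite_mul, one_mul, zero_mul]
  rw [Finset.sum_ite_eq' S.powerset S (fun W => v W), if_pos (Finset.mem_powerset.2 le_rfl)]

def mob (v : Finset (Fin m) → ZMod 2) (T : Finset (Fin m)) : ZMod 2 :=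
  ∑ S ∈ Finset.univ.filter (fun S => T ⊆ S), v S

lemma mob_eq_dval (v : Finset (Fin m) → ZMod 2) (T : Finset (Fin m)) :
    mob v T = dval (fun U => v Uᶜ) Tᶜ := by
  unfold mob dval
  apply Finset.sum_nbij' (fun S => Sᶜ) (fun U => Uᶜ)
  · intro S hS
    simp only [Finset.mem_filter, Finset.mem_univ, true_and] at hS
    rw [Finset.mem_powerset]
    exact Finset.compl_subset_compl.2 hS
  · intro U hU
    simp only [Finset.mem_powerset] at hU
    simp only [Finset.mem_filter, Finset.mem_univ, true_and]
    have := Finset.compl_subset_compl.2 hU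
    rwa [compl_compl] at this
  · intro S _; exact compl_compl S
  · intro U _; exact compl_compl U
  · intro S _; rw [compl_compl]

lemma mob_mob (v : Finset (Fin m) → ZMod 2) (T : Finset (Fin m)) :
    mob (mob v) T = v T := by
  rw [mob_eq_dval]
  have h1 : (fun U => mob v Uᶜ) = dval (fun U => v Uᶜ) := by
    funext U; rw [mob_eq_dval, compl_compl]
  rw [h1, dval_dval]
  rw [compl_compl]

lemma weight_lb (l : ℕ) (hl : l ≤ m) (w : Finset (Fin m) → ZMod 2) (hw : w ≠ 0)
    (h : ∀ T : Finset (Fin m), T.card < l → mob w T = 0) :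
    2 ^ l ≤ hammingNorm w := by
  set d := mob w with hd
  set e : Finset (Fin m) → ZMod 2 := fun U => d Uᶜ with he
  have hdne : d ≠ 0 := by
    intro h0
    apply hw; funext T
    have h2 : w T = mob d T := (mob_mob w T).symm
    rw [h0] at h2
    simpa [mob] using h2
  have hene : e ≠ 0 := by
    intro h0
    apply hdne; funext T
    have h2 := congrFun h0 Tᶜ
    simpa [he, compl_compl] using h2
  have hdeg : ∀ U : Finset (Fin m), e U ≠ 0 → U.card ≤ m - l := by
    intro U hU
    have h2 : ¬ (Uᶜ.card < l) := fun hc => hU (h _ hc)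
    have h3 : Uᶜ.card = m - U.card := by
      rw [Finset.card_compl]; simp
    have h4 : U.card ≤ m := by
      have := Finset.card_le_card (Finset.subset_univ U)
      simpa using this
    omega
  have hdval : ∀ S : Finset (Fin m), dval e S = w Sᶜ := by
    intro S
    have h2 : dval e S = mob d Sᶜ := by
      rw [mob_eq_dval d Sᶜ, compl_compl]
    rw [h2, hd, mob_mob]
  have hmain := RM_lb (Finset.univ : Finset (Fin m)) (m - l) e
    (fun U _ => Finset.subset_univ U) hdeg hene
  have hcard : (Finset.univ : Finset (Fin m)).card - (m - l) = l := by
    simp only [Finset.card_univ, Fintype.card_fin]; omega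
  rw [hcard] at hmain
  refine le_trans hmain (le_of_eq ?_)
  rw [Finset.powerset_univ]
  unfold hammingNorm
  apply Finset.card_nbij' (fun S => Sᶜ) (fun S => Sᶜ)
  · intro S hS
    simp only [Finset.mem_coe, Finset.mem_filter, Finset.mem_univ, true_and] at hS ⊢
    rw [hdval] at hS
    simpa using hS
  · intro S hS
    simp only [Finset.mem_coe, Finset.mem_filter, Finset.mem_univ, true_and] at hS ⊢
    rw [hdval, compl_compl]
    simpa using hS
  · intro S _; exact compl_compl S
  · intro S _; exact compl_compl S

noncomputable def expT (T : Finset (Fin m)) : Fin m →₀ ℕ := ∑ i ∈ T, Finsupp.single i 1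

lemma expT_apply (T : Finset (Fin m)) (j : Fin m) :
    expT T j = if j ∈ T then 1 else 0 := by
  unfold expT
  rw [Finsupp.finset_sum_apply]
  simp_rw [Finsupp.single_apply]
  rw [Finset.sum_ite_eq' T j (fun _ => 1)]

lemma expT_inj {S T : Finset (Fin m)} (h : expT S = expT T) : S = T := by
  ext i
  have h2 := congrFun (congrArg DFunLike.coe h) i
  rw [expT_apply, expT_apply] at h2
  by_cases hS : i ∈ S <;> by_cases hT : i ∈ T <;> simp [hS, hT] at h2 ⊢

lemma expT_degree (T : Finset (Fin m)) : ((expT T).sum fun _ n => n) = T.card := by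
  induction T using Finset.induction_on with
  | empty => simp [expT]
  | @insert a T ha IH =>
    have h1 : expT (insert a T) = Finsupp.single a 1 + expT T := by
      unfold expT; rw [Finset.sum_insert ha]
    rw [h1, Finsupp.sum_add_index' (fun _ => rfl) (fun _ _ _ => rfl),
      Finsupp.sum_single_index rfl, IH, Finset.card_insert_of_notMem ha]
    omega

lemma XI_eq_monomial (S : Finset (Fin m)) : XI m S = monomial (expT S) 1 := by
  unfold XI expT
  induction S using Finset.induction_on with
  | empty => simp
  | @insert a S ha IH =>
    rw [Finset.prod_insert ha, Finset.sum_insert ha, IH, X, monomial_mul, one_mul]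

noncomputable def sg (m : ℕ) :
    MvPolynomial (Fin m) (ZMod 2) →ₐ[ZMod 2] MvPolynomial (Fin m) (ZMod 2) :=
  aeval (fun i => X i + 1)

lemma sg_XI (S : Finset (Fin m)) : sg m (XI m S) = ∑ S' ∈ S.powerset, XI m S' := by
  unfold XI sg
  rw [map_prod]
  simp only [map_add, aeval_X, map_one]
  rw [Finset.prod_add]
  simp

lemma phi_eq_mob (w : Finset (Fin m) → ZMod 2) (T : Finset (Fin m)) :
    coeff (expT T) (sg m (∑ S : Finset (Fin m), w S • XI m S)) = mob w T := by
  rw [map_sum, coeff_sum]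
  have h1 : ∀ S : Finset (Fin m),
      coeff (expT T) (sg m (w S • XI m S)) = w S * (if T ⊆ S then 1 else 0) := by
    intro S
    rw [map_smul, coeff_smul, sg_XI, coeff_sum]
    simp_rw [XI_eq_monomial, coeff_monomial]
    have h2 : ∀ S' ∈ S.powerset,
        (if expT S' = expT T then (1 : ZMod 2) else 0) = if S' = T then 1 else 0 := by
      intro S' _
      congr 1
      simp only [eq_iff_iff]
      exact ⟨fun h => expT_inj h, fun h => by rw [h]⟩
    rw [Finset.sum_congr rfl h2, Finset.sum_ite_eq' S.powerset T (fun _ => 1)]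
    simp only [Finset.mem_powerset, smul_eq_mul]
  rw [Finset.sum_congr rfl (fun S _ => h1 S)]
  unfold mob
  rw [Finset.sum_filter]
  apply Finset.sum_congr rfl
  intro S _
  split <;> ring

lemma constcoeff_K (b : MvPolynomial (Fin m) (ZMod 2))
    (hb : b ∈ Ideal.span {p : MvPolynomial (Fin m) (ZMod 2) | ∃ i, p = X i}) :
    coeff 0 b = 0 := by
  have hle : Ideal.span {p : MvPolynomial (Fin m) (ZMod 2) | ∃ i, p = X i}
      ≤ RingHom.ker (constantCoeff : MvPolynomial (Fin m) (ZMod 2) →+* ZMod 2) := by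
    rw [Ideal.span_le]
    rintro p ⟨i, rfl⟩
    simp [RingHom.mem_ker]
  have h2 := hle hb
  rw [RingHom.mem_ker, constantCoeff_eq] at h2
  exact h2

lemma coeff_eq_zero_of_mem_Kpow (l : ℕ) :
    ∀ p ∈ (Ideal.span {p : MvPolynomial (Fin m) (ZMod 2) | ∃ i, p = X i}) ^ l,
    ∀ d : Fin m →₀ ℕ, ((d.sum fun _ n => n) < l) → coeff d p = 0 := by
  induction l with
  | zero => intro p _ d hd; omega
  | succ l IH =>
    intro p hp d hd
    rw [pow_succ] at hp
    refine Submodule.mul_induction_on hp ?_ ?_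
    · intro a ha b hb
      rw [coeff_mul]
      apply Finset.sum_eq_zero
      rintro ⟨u, v⟩ huv
      rw [Finset.HasAntidiagonal.mem_antidiagonal] at huv
      by_cases hu : (u.sum fun _ n => n) < l
      · rw [IH a ha u hu, zero_mul]
      · have hsum : (u.sum fun _ n => n) + (v.sum fun _ n => n) = d.sum fun _ n => n := by
          rw [← huv]
          exact (Finsupp.sum_add_index' (fun _ => rfl) (fun _ _ _ => rfl)).symm
        have hv : (v.sum fun _ n => n) = 0 := by omega
        have hv0 : v = 0 := by
          have h2 : ∀ i ∈ v.support, v i = 0 := by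
            rw [← Finset.sum_eq_zero_iff]
            exact hv
          ext i
          by_cases hi : i ∈ v.support
          · simp [h2 i hi]
          · simpa using Finsupp.notMem_support_iff.1 hi
        rw [hv0, constcoeff_K b hb, mul_zero]
    · intro x y hx hy
      rw [coeff_add, hx, hy, add_zero]

lemma coeff_eq_zero_of_mem_spanXsq (p : MvPolynomial (Fin m) (ZMod 2))
    (hp : p ∈ Ideal.span {p : MvPolynomial (Fin m) (ZMod 2) | ∃ i, p = X i ^ 2})
    (d : Fin m →₀ ℕ) (hd : ∀ i, d i ≤ 1) : coeff d p = 0 := by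
  induction hp using Submodule.span_induction generalizing d with
  | mem x hx =>
    obtain ⟨i, rfl⟩ := hx
    rw [X_pow_eq_monomial, coeff_monomial]
    have : ¬ (Finsupp.single i 2 = d) := by
      intro h
      have := congrFun (congrArg DFunLike.coe h) i
      simp [Finsupp.single_apply] at this
      have := hd i
      omega
    rw [if_neg this]
  | zero => simp
  | add x y hx hy ihx ihy => rw [coeff_add, ihx d hd, ihy d hd, add_zero]
  | smul r x hx ihx =>
    rw [smul_eq_mul, coeff_mul]
    apply Finset.sum_eq_zero
    rintro ⟨u, v⟩ huv
    rw [Finset.HasAntidiagonal.mem_antidiagonal] at huv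
    have hv : ∀ i, v i ≤ 1 := by
      intro i
      have := congrFun (congrArg DFunLike.coe huv) i
      have := hd i
      simp only [Finsupp.coe_add, Pi.add_apply] at *
      omega
    rw [ihx v hv, mul_zero]

lemma sg_rel_le :
    Ideal.map (sg m) (relIdeal m)
      ≤ Ideal.span {p : MvPolynomial (Fin m) (ZMod 2) | ∃ i, p = X i ^ 2} := by
  unfold relIdeal
  rw [Ideal.map_span]
  apply Ideal.span_le.2
  rintro q ⟨p, ⟨i, rfl⟩, rfl⟩
  have h1 : sg m (X i ^ 2 - 1) = X i ^ 2 := by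
    unfold sg
    rw [map_sub, map_pow, aeval_X, map_one]
    have h2 : (2 : MvPolynomial (Fin m) (ZMod 2)) = 0 := CharTwo.two_eq_zero
    ring_nf
    rw [h2]
    ring
  rw [h1]
  exact Ideal.subset_span ⟨i, rfl⟩

lemma sg_J_le :
    Ideal.map (sg m) (Ideal.span {p : MvPolynomial (Fin m) (ZMod 2) | ∃ i, p = X i - 1})
      ≤ Ideal.span {p : MvPolynomial (Fin m) (ZMod 2) | ∃ i, p = X i} := by
  rw [Ideal.map_span]
  apply Ideal.span_le.2
  rintro q ⟨p, ⟨i, rfl⟩, rfl⟩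
  have h1 : sg m (X i - 1) = X i := by
    unfold sg
    rw [map_sub, aeval_X, map_one]
    ring
  rw [h1]
  exact Ideal.subset_span ⟨i, rfl⟩

lemma Mideal_eq (m : ℕ) : Mideal m = Ideal.map (Ideal.Quotient.mk (relIdeal m))
    (Ideal.span {p : MvPolynomial (Fin m) (ZMod 2) | ∃ i, p = X i - 1}) := by
  unfold Mideal
  rw [Ideal.map_span]
  congr 1
  ext a
  constructor
  · rintro ⟨i, rfl⟩; exact ⟨X i - 1, ⟨i, rfl⟩, rfl⟩
  · rintro ⟨p, ⟨i, rfl⟩, rfl⟩; exact ⟨i, rfl⟩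

lemma mob_zero_of_mem (l : ℕ) (w : Finset (Fin m) → ZMod 2)
    (hmem : toA m w ∈ Mideal m ^ l) :
    ∀ T : Finset (Fin m), T.card < l → mob w T = 0 := by
  intro T hT
  rw [Mideal_eq, ← Ideal.map_pow] at hmem
  obtain ⟨q, hq, hq2⟩ :=
    (Ideal.mem_map_iff_of_surjective _ Ideal.Quotient.mk_surjective).1 hmem
  have hs : q - (∑ S : Finset (Fin m), w S • XI m S) ∈ relIdeal m :=
    (Ideal.Quotient.eq).1 hq2
  rw [← phi_eq_mob]
  have hdecomp : (∑ S : Finset (Fin m), w S • XI m S)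
      = q + ((∑ S : Finset (Fin m), w S • XI m S) - q) := by ring
  rw [hdecomp, map_add, coeff_add]
  have h1 : coeff (expT T) (sg m q) = 0 := by
    have hq' : sg m q ∈ (Ideal.span {p : MvPolynomial (Fin m) (ZMod 2) | ∃ i, p = X i}) ^ l := by
      have h3 : sg m q ∈ Ideal.map (sg m)
          ((Ideal.span {p : MvPolynomial (Fin m) (ZMod 2) | ∃ i, p = X i - 1}) ^ l) :=
        Ideal.mem_map_of_mem _ hq
      rw [Ideal.map_pow] at h3
      exact Ideal.pow_right_mono sg_J_le l h3
    apply coeff_eq_zero_of_mem_Kpow l _ hq'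
    rw [expT_degree]
    exact hT
  have h2 : coeff (expT T) (sg m ((∑ S : Finset (Fin m), w S • XI m S) - q)) = 0 := by
    have h3 : (∑ S : Finset (Fin m), w S • XI m S) - q ∈ relIdeal m := by
      have := (relIdeal m).neg_mem hs
      simpa using this
    have h4 : sg m ((∑ S : Finset (Fin m), w S • XI m S) - q)
        ∈ Ideal.map (sg m) (relIdeal m) := Ideal.mem_map_of_mem _ h3
    apply coeff_eq_zero_of_mem_spanXsq _ (sg_rel_le h4)
    intro i
    rw [expT_apply]
    split <;> omega
  rw [h1, h2, add_zero]

lemma exists_min_weight (l : ℕ) (hl : l ≤ m) : ∃ w : Finset (Fin m) → ZMod 2,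
    w ≠ 0 ∧ toA m w ∈ Mideal m ^ l ∧ hammingNorm w = 2 ^ l := by
  obtain ⟨I, -, hIcard⟩ := Finset.exists_subset_card_eq
    (s := (Finset.univ : Finset (Fin m))) (n := l) (by simpa using hl)
  refine ⟨fun S => if S ⊆ I then 1 else 0, ?_, ?_, ?_⟩
  · intro h0
    have h1 := congrFun h0 ∅
    simp at h1
  · have hPsum : (∑ S : Finset (Fin m), (if S ⊆ I then (1 : ZMod 2) else 0) • XI m S)
        = ∏ i ∈ I, (X i + 1) := by
      rw [Finset.prod_add]
      simp only [Finset.prod_const_one, mul_one]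
      simp only [ite_smul, one_smul, zero_smul]
      rw [Finset.sum_ite, Finset.sum_const_zero, add_zero]
      apply Finset.sum_nbij' id id
      · intro S hS
        simp only [Finset.mem_filter, Finset.mem_univ, true_and] at hS
        simpa [Finset.mem_powerset] using hS
      · intro S hS
        simp only [Finset.mem_powerset] at hS
        simp [hS]
      · intro S _; rfl
      · intro S _; rfl
      · intro S _; rfl
    unfold toA
    rw [hPsum]
    have hmk : Ideal.Quotient.mk (relIdeal m) (∏ i ∈ I, (X i + 1))
        = ∏ i ∈ I, Ideal.Quotient.mk (relIdeal m) (X i - 1) := by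
      rw [map_prod]
      apply Finset.prod_congr rfl
      intro i _
      rw [CharTwo.sub_eq_add]
    rw [hmk]
    have hprod : (∏ _i ∈ I, Mideal m) = Mideal m ^ l := by
      rw [Finset.prod_const, hIcard]
    rw [← hprod]
    exact Ideal.prod_mem_prod (fun i _ => Ideal.subset_span ⟨i, rfl⟩)
  · unfold hammingNorm
    have hset : ({S | (fun S => if S ⊆ I then (1 : ZMod 2) else 0) S ≠ 0} : Finset (Finset (Fin m)))
        = I.powerset := by
      ext S
      simp only [Finset.mem_filter, Finset.mem_univ, true_and, Finset.mem_powerset, ne_eq,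
        Set.mem_setOf_eq]
      split <;> simp_all
    rw [hset, Finset.card_powerset, hIcard]

end RMaux

/-- the minimum Hamming weight of a nonzero word of the Reed–Muller code Mˡ
(viewed inside F₂^{2^m}) is 2ˡ. -/
theorem stmt6 (m l : ℕ) (hl : l ≤ m) :
    IsLeast {k : ℕ | ∃ w : Finset (Fin m) → ZMod 2,
      w ≠ 0 ∧ toA m w ∈ Mideal m ^ l ∧ hammingNorm w = k} (2 ^ l) := by
  constructor
  · obtain ⟨w, h1, h2, h3⟩ := exists_min_weight l hl
    exact ⟨w, h1, h2, h3⟩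
  · rintro k ⟨w, hw, hmem, rfl⟩
    exact weight_lb l hl w hw (mob_zero_of_mem l w hmem)
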